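/- Let N ≥ 1 and let c_0, c_1, …, c_{N−1} be real numbers. Let T ∈ ℝ^{N×N} be the symmetric Toeplitz matrix T_{ij} = c_{|i−j|}, and define ĉ_m = c_m if 0 ≤ m ≤ N−1 and ĉ_m = 0 otherwise. Let H ∈ ℝ^{N×N} be the Hankel matrix H_{ij} = ĉ_{i+j} + ĉ_{2(N+1)−(i+j)} for 1 ≤ i, j ≤ N. Then the τ matrix T − H is diagonalized by the discrete sine transform: for each k ∈ {1, …, N}, the sine vector v^{(k)} with components v^{(k)}_j = sin(jkπ/(N+1)) satisfies (T − H)·v^{(k)} = λ_k·v^{(k)} with λ_k = c_0 + 2·∑_{m=1}^{N−1} c_m·cos(mkπ/(N+1)); equivalently S(T − H)S is the diagonal matrix diag(λ_1, …, λ_N), where S is the DST matrix. -/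

import Mathlib

open Real Matrix

/-- The discrete sine transform (DST) matrix of order `N`. -/
noncomputable def dstMatrix (N : ℕ) : Matrix (Fin N) (Fin N) ℝ :=
  Matrix.of fun j k =>
    Real.sqrt (2 / ((N : ℝ) + 1)) *
      Real.sin ((((j : ℕ) : ℝ) + 1) * (((k : ℕ) : ℝ) + 1) * π / ((N : ℝ) + 1))

/-- `ĉ_m = c_m` for `0 ≤ m ≤ N-1` and `ĉ_m = 0` otherwise. -/
def chat (N : ℕ) (c : ℕ → ℝ) (m : ℕ) : ℝ := if m < N then c m else 0

/-- The symmetric Toeplitz matrix `T_{ij} = c_{|i-j|}`. -/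
def toeplitzOf (N : ℕ) (c : ℕ → ℝ) : Matrix (Fin N) (Fin N) ℝ :=
  Matrix.of fun i j => c (((i : ℤ) - (j : ℤ)).natAbs)

/-- The Hankel correction matrix `H_{ij} = ĉ_{i+j} + ĉ_{2(N+1)-(i+j)}` (1-based indices). -/
def hankelOf (N : ℕ) (c : ℕ → ℝ) : Matrix (Fin N) (Fin N) ℝ :=
  Matrix.of fun i j =>
    chat N c (((i : ℕ) + 1) + ((j : ℕ) + 1)) +
      chat N c (2 * (N + 1) - (((i : ℕ) + 1) + ((j : ℕ) + 1)))

/-- The eigenvalues `λ_k = c_0 + 2 ∑_{m=1}^{N-1} c_m cos(mkπ/(N+1))` (with `k` 1-based). -/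
noncomputable def tauEigen (N : ℕ) (c : ℕ → ℝ) (k : Fin N) : ℝ :=
  c 0 + 2 * ∑ m ∈ Finset.Ico 1 N,
    c m * Real.cos ((m : ℝ) * (((k : ℕ) : ℝ) + 1) * π / ((N : ℝ) + 1))

/-! ### Auxiliary definitions and lemmas -/

/-- The extended sine vector `a ↦ sin (a s π / (N+1))` for `a : ℤ`. -/
noncomputable def FF (N s : ℕ) (a : ℤ) : ℝ := Real.sin ((a : ℝ) * s * π / ((N:ℝ)+1))

/-- `FF` truncated to the index window `[1, N]`. -/
noncomputable def II (N s : ℕ) (a : ℤ) : ℝ := if 1 ≤ a ∧ a ≤ N then FF N s a else 0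

lemma FF_neg (N s : ℕ) (a : ℤ) : FF N s (-a) = - FF N s a := by
  simp [FF, neg_mul, neg_div]

lemma FF_zero (N s : ℕ) : FF N s 0 = 0 := by simp [FF]

lemma FF_Nsucc (N s : ℕ) : FF N s (N+1) = 0 := by
  have : (((N:ℤ)+1 : ℤ) : ℝ) * s * π / ((N:ℝ)+1) = (s:ℝ) * π := by
    have hne : ((N:ℝ)+1) ≠ 0 := by positivity
    push_cast; field_simp
  rw [FF, this]; exact Real.sin_nat_mul_pi s

lemma FF_reflect (N s : ℕ) (a : ℤ) : FF N s (2*(N+1) - a) = - FF N s a := by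
  have hne : ((N:ℝ)+1) ≠ 0 := by positivity
  have h : ((2*((N:ℤ)+1) - a : ℤ) : ℝ) * s * π / ((N:ℝ)+1)
      = ((2*s : ℤ) : ℝ) * π - ((a:ℝ) * s * π / ((N:ℝ)+1)) := by
    push_cast; field_simp
  rw [FF, h, Real.sin_int_mul_pi_sub]
  have : ((-1:ℝ)) ^ (2*(s:ℤ)) = 1 := by rw [_root_.zpow_mul]; norm_num
  rw [this, one_mul]; rfl

lemma sum_ind (N s : ℕ) (a : ℤ) :
    ∑ t : Fin N, (if ((t:ℕ):ℤ) + 1 = a then (1:ℝ) else 0) * FF N s (((t:ℕ):ℤ)+1)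
      = II N s a := by
  by_cases h : 1 ≤ a ∧ a ≤ N
  · obtain ⟨h1, h2⟩ := h
    have ha : a.toNat - 1 < N := by omega
    rw [II, if_pos ⟨h1, h2⟩]
    rw [Fintype.sum_eq_single (⟨a.toNat - 1, ha⟩ : Fin N)]
    · have : ((((⟨a.toNat - 1, ha⟩ : Fin N) : ℕ) : ℤ)) + 1 = a := by
        simp only []; omega
      rw [this, if_pos rfl, one_mul]
    · intro t ht
      rw [if_neg, zero_mul]
      intro hc
      apply ht
      apply Fin.ext
      simp only []
      omega
  · rw [II, if_neg h]
    apply Finset.sum_eq_zero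
    intro t _
    rw [if_neg, zero_mul]
    intro hc
    apply h
    have := t.isLt
    omega

lemma claim1 (N s : ℕ) (r m : ℤ) (hr : 1 ≤ r) (hrN : r ≤ N) (hm : 1 ≤ m) (hmN : m ≤ (N:ℤ) - 1) :
    II N s (r - m) - II N s (m - r) = FF N s (r - m) := by
  rcases lt_trichotomy r m with h | h | h
  · unfold II; rw [if_neg (by omega), if_pos (by omega)]
    have : r - m = -(m - r) := by ring
    rw [this, FF_neg]; ring
  · subst h
    unfold II
    rw [if_neg (by omega)]
    simp [sub_self, FF_zero]
  · unfold II; rw [if_pos (by omega), if_neg (by omega)]; ring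

lemma claim2 (N s : ℕ) (r m : ℤ) (hr : 1 ≤ r) (hrN : r ≤ N) (hm : 1 ≤ m) (hmN : m ≤ (N:ℤ) - 1) :
    II N s (r + m) - II N s (2*(N+1) - m - r) = FF N s (r + m) := by
  rcases lt_trichotomy (r + m) ((N:ℤ) + 1) with h | h | h
  · unfold II; rw [if_pos (by omega), if_neg (by omega)]; ring
  · unfold II; rw [if_neg (by omega), if_neg (by omega), h, FF_Nsucc]; ring
  · unfold II; rw [if_neg (by omega), if_pos (by omega)]
    have h2 : 2*((N:ℤ)+1) - m - r = 2*((N:ℤ)+1) - (r + m) := by ring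
    rw [h2, FF_reflect]; ring

lemma trig_combine (N s : ℕ) (r : ℤ) (m : ℕ) :
    FF N s (r - m) + FF N s (r + m)
      = 2 * Real.cos ((m:ℝ) * s * π / ((N:ℝ)+1)) * FF N s r := by
  rw [FF, FF, FF]
  have h1 : ((r - (m:ℤ) : ℤ) : ℝ) * s * π / ((N:ℝ)+1)
      = (r:ℝ) * s * π / ((N:ℝ)+1) - (m:ℝ) * s * π / ((N:ℝ)+1) := by push_cast; ring
  have h2 : ((r + (m:ℤ) : ℤ) : ℝ) * s * π / ((N:ℝ)+1)
      = (r:ℝ) * s * π / ((N:ℝ)+1) + (m:ℝ) * s * π / ((N:ℝ)+1) := by push_cast; ring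
  rw [h1, h2, Real.sin_sub, Real.sin_add]; ring

lemma per_m (N s : ℕ) (j : Fin N) (m : ℕ) (hm : 1 ≤ m) (hmN : m < N) :
    (∑ t : Fin N,
      (((if ((((j:ℕ):ℤ) - ((t:ℕ):ℤ)).natAbs = m) then (1:ℝ) else 0)
        - (if ((j:ℕ)+1) + ((t:ℕ)+1) = m then (1:ℝ) else 0)
        - (if 2*(N+1) - (((j:ℕ)+1) + ((t:ℕ)+1)) = m then (1:ℝ) else 0))
        * FF N s (((t:ℕ):ℤ)+1)))
    = FF N s (((j:ℕ):ℤ)+1 - m) + FF N s (((j:ℕ):ℤ)+1 + m) := by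
  have hj := j.isLt
  have key : ∀ t : Fin N,
      (((if ((((j:ℕ):ℤ) - ((t:ℕ):ℤ)).natAbs = m) then (1:ℝ) else 0)
        - (if ((j:ℕ)+1) + ((t:ℕ)+1) = m then (1:ℝ) else 0)
        - (if 2*(N+1) - (((j:ℕ)+1) + ((t:ℕ)+1)) = m then (1:ℝ) else 0))
        * FF N s (((t:ℕ):ℤ)+1))
      = (if ((t:ℕ):ℤ)+1 = ((j:ℕ):ℤ)+1 - m then (1:ℝ) else 0) * FF N s (((t:ℕ):ℤ)+1)
        + (if ((t:ℕ):ℤ)+1 = ((j:ℕ):ℤ)+1 + m then (1:ℝ) else 0) * FF N s (((t:ℕ):ℤ)+1)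
        - (if ((t:ℕ):ℤ)+1 = (m:ℤ) - (((j:ℕ):ℤ)+1) then (1:ℝ) else 0) * FF N s (((t:ℕ):ℤ)+1)
        - (if ((t:ℕ):ℤ)+1 = 2*((N:ℤ)+1) - m - (((j:ℕ):ℤ)+1) then (1:ℝ) else 0) * FF N s (((t:ℕ):ℤ)+1) := by
    intro t
    have ht := t.isLt
    have e1 : (if ((((j:ℕ):ℤ) - ((t:ℕ):ℤ)).natAbs = m) then (1:ℝ) else 0)
        = (if ((t:ℕ):ℤ)+1 = ((j:ℕ):ℤ)+1 - m then (1:ℝ) else 0)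
          + (if ((t:ℕ):ℤ)+1 = ((j:ℕ):ℤ)+1 + m then (1:ℝ) else 0) := by
      by_cases h1 : ((t:ℕ):ℤ)+1 = ((j:ℕ):ℤ)+1 - m
      · rw [if_pos (by omega), if_pos h1, if_neg (by omega)]; norm_num
      · by_cases h2 : ((t:ℕ):ℤ)+1 = ((j:ℕ):ℤ)+1 + m
        · rw [if_pos (by omega), if_neg h1, if_pos h2]; norm_num
        · rw [if_neg (by omega), if_neg h1, if_neg h2]; norm_num
    have e2 : (if ((j:ℕ)+1) + ((t:ℕ)+1) = m then (1:ℝ) else 0)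
        = (if ((t:ℕ):ℤ)+1 = (m:ℤ) - (((j:ℕ):ℤ)+1) then (1:ℝ) else 0) := by
      apply if_congr _ rfl rfl; omega
    have e3 : (if 2*(N+1) - (((j:ℕ)+1) + ((t:ℕ)+1)) = m then (1:ℝ) else 0)
        = (if ((t:ℕ):ℤ)+1 = 2*((N:ℤ)+1) - m - (((j:ℕ):ℤ)+1) then (1:ℝ) else 0) := by
      apply if_congr _ rfl rfl; omega
    rw [e1, e2, e3]; ring
  rw [Finset.sum_congr rfl (fun t _ => key t)]
  rw [Finset.sum_sub_distrib, Finset.sum_sub_distrib, Finset.sum_add_distrib]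
  rw [sum_ind, sum_ind, sum_ind, sum_ind]
  have h1 := claim1 N s (((j:ℕ):ℤ)+1) m (by omega) (by omega) (by omega) (by omega)
  have h2 := claim2 N s (((j:ℕ):ℤ)+1) m (by omega) (by omega) (by omega) (by omega)
  linarith [h1, h2]

lemma per_zero (N s : ℕ) (j : Fin N) :
    (∑ t : Fin N,
      (((if ((((j:ℕ):ℤ) - ((t:ℕ):ℤ)).natAbs = 0) then (1:ℝ) else 0)
        - (if ((j:ℕ)+1) + ((t:ℕ)+1) = 0 then (1:ℝ) else 0)
        - (if 2*(N+1) - (((j:ℕ)+1) + ((t:ℕ)+1)) = 0 then (1:ℝ) else 0))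
        * FF N s (((t:ℕ):ℤ)+1)))
    = FF N s (((j:ℕ):ℤ)+1) := by
  have hj := j.isLt
  have key : ∀ t : Fin N,
      (((if ((((j:ℕ):ℤ) - ((t:ℕ):ℤ)).natAbs = 0) then (1:ℝ) else 0)
        - (if ((j:ℕ)+1) + ((t:ℕ)+1) = 0 then (1:ℝ) else 0)
        - (if 2*(N+1) - (((j:ℕ)+1) + ((t:ℕ)+1)) = 0 then (1:ℝ) else 0))
        * FF N s (((t:ℕ):ℤ)+1))
      = (if ((t:ℕ):ℤ)+1 = ((j:ℕ):ℤ)+1 then (1:ℝ) else 0) * FF N s (((t:ℕ):ℤ)+1) := by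
    intro t
    have ht := t.isLt
    have e1 : (if ((((j:ℕ):ℤ) - ((t:ℕ):ℤ)).natAbs = 0) then (1:ℝ) else 0)
        = (if ((t:ℕ):ℤ)+1 = ((j:ℕ):ℤ)+1 then (1:ℝ) else 0) := by
      apply if_congr _ rfl rfl; omega
    have e2 : (if ((j:ℕ)+1) + ((t:ℕ)+1) = 0 then (1:ℝ) else 0) = 0 := by
      rw [if_neg]; omega
    have e3 : (if 2*(N+1) - (((j:ℕ)+1) + ((t:ℕ)+1)) = 0 then (1:ℝ) else 0) = 0 := by
      rw [if_neg]; omega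
    rw [e1, e2, e3]; ring
  rw [Finset.sum_congr rfl (fun t _ => key t), sum_ind]
  unfold II
  rw [if_pos ⟨by omega, by omega⟩]

lemma chat_eq (N : ℕ) (c : ℕ → ℝ) (p : ℕ) :
    chat N c p = ∑ m ∈ Finset.range N, (if p = m then c m else 0) := by
  rw [chat, Finset.sum_ite_eq]
  simp [Finset.mem_range]

lemma component (N : ℕ) (hN : 1 ≤ N) (c : ℕ → ℝ) (k j : Fin N) :
    ∑ t : Fin N, (toeplitzOf N c - hankelOf N c) j t * FF N ((k:ℕ)+1) (((t:ℕ):ℤ)+1)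
      = tauEigen N c k * FF N ((k:ℕ)+1) (((j:ℕ):ℤ)+1) := by
  have hj := j.isLt
  have hentry : ∀ t : Fin N, (toeplitzOf N c - hankelOf N c) j t
      = ∑ m ∈ Finset.range N,
          ((if ((((j:ℕ):ℤ) - ((t:ℕ):ℤ)).natAbs = m) then c m else 0)
           - (if ((j:ℕ)+1) + ((t:ℕ)+1) = m then c m else 0)
           - (if 2*(N+1) - (((j:ℕ)+1) + ((t:ℕ)+1)) = m then c m else 0)) := by
    intro t
    have ht := t.isLt
    have habs : ((((j:ℕ):ℤ) - ((t:ℕ):ℤ)).natAbs) < N := by omega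
    simp only [Matrix.sub_apply, toeplitzOf, hankelOf, Matrix.of_apply]
    rw [show c ((((j:Fin N):ℤ) - ((t:Fin N):ℤ)).natAbs)
        = chat N c ((((j:ℕ):ℤ) - ((t:ℕ):ℤ)).natAbs) from by rw [chat, if_pos habs]]
    rw [chat_eq, chat_eq, chat_eq, Finset.sum_sub_distrib, Finset.sum_sub_distrib]
    ring
  calc ∑ t : Fin N, (toeplitzOf N c - hankelOf N c) j t * FF N ((k:ℕ)+1) (((t:ℕ):ℤ)+1)
      = ∑ t : Fin N, ∑ m ∈ Finset.range N,
          (((if ((((j:ℕ):ℤ) - ((t:ℕ):ℤ)).natAbs = m) then c m else 0)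
           - (if ((j:ℕ)+1) + ((t:ℕ)+1) = m then c m else 0)
           - (if 2*(N+1) - (((j:ℕ)+1) + ((t:ℕ)+1)) = m then c m else 0))
           * FF N ((k:ℕ)+1) (((t:ℕ):ℤ)+1)) := by
        refine Finset.sum_congr rfl fun t _ => ?_
        rw [hentry t, Finset.sum_mul]
    _ = ∑ m ∈ Finset.range N, ∑ t : Fin N,
          (((if ((((j:ℕ):ℤ) - ((t:ℕ):ℤ)).natAbs = m) then c m else 0)
           - (if ((j:ℕ)+1) + ((t:ℕ)+1) = m then c m else 0)
           - (if 2*(N+1) - (((j:ℕ)+1) + ((t:ℕ)+1)) = m then c m else 0))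
           * FF N ((k:ℕ)+1) (((t:ℕ):ℤ)+1)) := Finset.sum_comm
    _ = ∑ m ∈ Finset.range N, (c m * ∑ t : Fin N,
          (((if ((((j:ℕ):ℤ) - ((t:ℕ):ℤ)).natAbs = m) then (1:ℝ) else 0)
           - (if ((j:ℕ)+1) + ((t:ℕ)+1) = m then (1:ℝ) else 0)
           - (if 2*(N+1) - (((j:ℕ)+1) + ((t:ℕ)+1)) = m then (1:ℝ) else 0))
           * FF N ((k:ℕ)+1) (((t:ℕ):ℤ)+1))) := by
        refine Finset.sum_congr rfl fun m _ => ?_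
        rw [Finset.mul_sum]
        refine Finset.sum_congr rfl fun t _ => ?_
        split_ifs <;> ring
    _ = tauEigen N c k * FF N ((k:ℕ)+1) (((j:ℕ):ℤ)+1) := by
        rw [Finset.range_eq_Ico, Finset.sum_eq_sum_Ico_succ_bot (by omega : 0 < N)]
        rw [per_zero]
        rw [Finset.sum_congr rfl (fun m hm => by
          rw [per_m N ((k:ℕ)+1) j m (Finset.mem_Ico.mp hm).1 (Finset.mem_Ico.mp hm).2,
            trig_combine])]
        rw [tauEigen]
        rw [Finset.sum_congr rfl (fun m _ => by
          rw [show ((m:ℝ) * (((k:ℕ)+1 : ℕ):ℝ) * π / ((N:ℝ)+1))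
              = ((m : ℝ) * (((k : ℕ) : ℝ) + 1) * π / ((N : ℝ) + 1)) from by push_cast; ring])]
        rw [Finset.sum_congr rfl (fun m _ => by
          rw [show c m * (2 * Real.cos ((m : ℝ) * (((k : ℕ) : ℝ) + 1) * π / ((N : ℝ) + 1))
                * FF N ((k:ℕ)+1) (((j:ℕ):ℤ)+1))
              = 2 * (c m * Real.cos ((m : ℝ) * (((k : ℕ) : ℝ) + 1) * π / ((N : ℝ) + 1))
                * FF N ((k:ℕ)+1) (((j:ℕ):ℤ)+1)) from by ring])]
        rw [show (0+1) = 1 from rfl, ← Finset.mul_sum, ← Finset.sum_mul]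
        ring

lemma FF_eq (N : ℕ) (k t : Fin N) :
    FF N ((k:ℕ)+1) (((t:ℕ):ℤ)+1)
      = Real.sin ((((t:ℕ):ℝ)+1) * (((k:ℕ):ℝ)+1) * π / ((N:ℝ)+1)) := by
  rw [FF, show ((((t:ℕ):ℤ)+1 : ℤ):ℝ) * (((k:ℕ)+1 : ℕ):ℝ) * π / ((N:ℝ)+1)
      = (((t:ℕ):ℝ)+1) * (((k:ℕ):ℝ)+1) * π / ((N:ℝ)+1) from by push_cast; ring]

lemma cos_sum (N : ℕ) (d : ℤ) (hd0 : d ≠ 0) (hd : d.natAbs < 2*(N+1)) :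
    ∑ t : Fin N, Real.cos ((((t:ℕ):ℝ)+1) * (d:ℝ) * π / ((N:ℝ)+1))
      = -(1 + Real.cos ((d:ℝ)*π))/2 := by
  have hne : ((N:ℝ)+1) ≠ 0 := by positivity
  set φ := (d:ℝ)*π/((N:ℝ)+1) with hφ
  have hπ : (π:ℝ) ≠ 0 := Real.pi_ne_zero
  have hsin : Real.sin (φ/2) ≠ 0 := by
    intro h
    obtain ⟨n, hn⟩ := Real.sin_eq_zero_iff.mp h
    rw [hφ] at hn
    have h2 : (n:ℝ) * (2*((N:ℝ)+1)) = (d:ℝ) := by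
      field_simp at hn
      nlinarith [hn, Real.pi_pos]
    have h3 : d = n * (2*((N:ℤ)+1)) := by exact_mod_cast h2.symm
    rcases eq_or_ne n 0 with h4 | h4
    · subst h4; simp at h3; exact hd0 h3
    · have h5 : (1:ℤ) ≤ |n| := by
        rcases abs_pos.mpr h4 with h; omega
      have h6 : (2*((N:ℤ)+1)) ≤ |d| := by
        rw [h3, abs_mul, abs_of_pos (show (0:ℤ) < 2*((N:ℤ)+1) by positivity)]
        nlinarith [abs_nonneg n]
      have h7 : |d| = (d.natAbs : ℤ) := Int.abs_eq_natAbs d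
      rw [h7] at h6
      omega
  have h2s : (2*Real.sin (φ/2)) ≠ 0 := mul_ne_zero two_ne_zero hsin
  have tele : ∀ t : ℕ, Real.sin ((((t+1:ℕ):ℝ)+1/2)*φ) - Real.sin (((t:ℝ)+1/2)*φ)
      = 2 * Real.sin (φ/2) * Real.cos (((t:ℝ)+1)*φ) := by
    intro t
    have h1 : (((t+1:ℕ):ℝ)+1/2)*φ = ((t:ℝ)+1)*φ + φ/2 := by push_cast; ring
    have h2 : ((t:ℝ)+1/2)*φ = ((t:ℝ)+1)*φ - φ/2 := by ring
    rw [h1, h2, Real.sin_add, Real.sin_sub]; ring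
  have hsum : 2 * Real.sin (φ/2) * (∑ t ∈ Finset.range N, Real.cos (((t:ℝ)+1)*φ))
      = Real.sin (((N:ℝ)+1/2)*φ) - Real.sin (((0:ℝ)+1/2)*φ) := by
    rw [Finset.mul_sum]
    rw [Finset.sum_congr rfl (fun t _ => (tele t).symm)]
    have := Finset.sum_range_sub (fun t : ℕ => Real.sin (((t:ℝ)+1/2)*φ)) N
    simpa using this
  have harg : ((N:ℝ)+1/2)*φ = (d:ℝ)*π - φ/2 := by
    rw [hφ]; field_simp; ring
  have hsd : Real.sin ((d:ℝ)*π) = 0 := Real.sin_int_mul_pi d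
  have hend : Real.sin (((N:ℝ)+1/2)*φ) = - Real.cos ((d:ℝ)*π) * Real.sin (φ/2) := by
    rw [harg, Real.sin_sub, hsd]; ring
  have h0 : Real.sin (((0:ℝ)+1/2)*φ) = Real.sin (φ/2) := by
    rw [show ((0:ℝ)+1/2)*φ = φ/2 from by ring]
  have hC : 2 * Real.sin (φ/2) * (∑ t ∈ Finset.range N, Real.cos (((t:ℝ)+1)*φ))
      = 2 * Real.sin (φ/2) * (-(1 + Real.cos ((d:ℝ)*π))/2) := by
    rw [hsum, hend, h0]; ring
  have hC2 := mul_left_cancel₀ h2s hC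
  rw [Fin.sum_univ_eq_sum_range (fun t => Real.cos ((((t:ℕ):ℝ)+1) * (d:ℝ) * π / ((N:ℝ)+1))) N]
  rw [Finset.sum_congr rfl (fun t _ => by
    rw [show (((t:ℕ):ℝ)+1) * (d:ℝ) * π / ((N:ℝ)+1) = (((t:ℕ):ℝ)+1)*φ from by rw [hφ]; ring])]
  exact hC2

lemma dst_sq (N : ℕ) : dstMatrix N * dstMatrix N = 1 := by
  have hne : ((N:ℝ)+1) ≠ 0 := by positivity
  have hq : (0:ℝ) ≤ 2 / ((N:ℝ)+1) := by positivity
  ext j k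
  have hj := j.isLt
  have hk := k.isLt
  rw [Matrix.mul_apply]
  simp only [dstMatrix, Matrix.of_apply]
  have step1 : ∀ i : Fin N,
      (Real.sqrt (2 / ((N:ℝ)+1)) * Real.sin ((((j:ℕ):ℝ)+1) * (((i:ℕ):ℝ)+1) * π / ((N:ℝ)+1))) *
      (Real.sqrt (2 / ((N:ℝ)+1)) * Real.sin ((((i:ℕ):ℝ)+1) * (((k:ℕ):ℝ)+1) * π / ((N:ℝ)+1)))
      = (2 / ((N:ℝ)+1)) * ((Real.cos ((((i:ℕ):ℝ)+1) * (((j:ℕ):ℝ) - ((k:ℕ):ℝ)) * π / ((N:ℝ)+1))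
          - Real.cos ((((i:ℕ):ℝ)+1) * (((j:ℕ):ℝ) + ((k:ℕ):ℝ) + 2) * π / ((N:ℝ)+1))) / 2) := by
    intro i
    have hA : (((i:ℕ):ℝ)+1) * (((j:ℕ):ℝ) - ((k:ℕ):ℝ)) * π / ((N:ℝ)+1)
        = (((j:ℕ):ℝ)+1) * (((i:ℕ):ℝ)+1) * π / ((N:ℝ)+1)
          - (((i:ℕ):ℝ)+1) * (((k:ℕ):ℝ)+1) * π / ((N:ℝ)+1) := by ring
    have hB : (((i:ℕ):ℝ)+1) * (((j:ℕ):ℝ) + ((k:ℕ):ℝ) + 2) * π / ((N:ℝ)+1)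
        = (((j:ℕ):ℝ)+1) * (((i:ℕ):ℝ)+1) * π / ((N:ℝ)+1)
          + (((i:ℕ):ℝ)+1) * (((k:ℕ):ℝ)+1) * π / ((N:ℝ)+1) := by ring
    rw [hA, hB, Real.cos_sub, Real.cos_add]
    have hs := Real.mul_self_sqrt hq
    linear_combination (Real.sin ((((j:ℕ):ℝ)+1) * (((i:ℕ):ℝ)+1) * π / ((N:ℝ)+1)) *
      Real.sin ((((i:ℕ):ℝ)+1) * (((k:ℕ):ℝ)+1) * π / ((N:ℝ)+1))) * hs
  rw [Finset.sum_congr rfl (fun i _ => step1 i)]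
  rw [← Finset.mul_sum]
  have hsumB : ∀ d1 : ℤ, d1 = ((j:ℕ):ℤ) + ((k:ℕ):ℤ) + 2 →
      ∑ i : Fin N, Real.cos ((((i:ℕ):ℝ)+1) * (((j:ℕ):ℝ) + ((k:ℕ):ℝ) + 2) * π / ((N:ℝ)+1))
        = -(1 + Real.cos ((d1:ℝ)*π))/2 := by
    intro d1 hd1
    have hd0 : d1 ≠ 0 := by omega
    have hdb : d1.natAbs < 2*(N+1) := by omega
    rw [Finset.sum_congr rfl (fun i _ => by
      rw [show (((i:ℕ):ℝ)+1) * (((j:ℕ):ℝ) + ((k:ℕ):ℝ) + 2) * π / ((N:ℝ)+1)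
          = (((i:ℕ):ℝ)+1) * ((d1:ℤ):ℝ) * π / ((N:ℝ)+1) from by rw [hd1]; push_cast; ring])]
    exact cos_sum N d1 hd0 hdb
  by_cases hjk : j = k
  · subst hjk
    have hC1 : ∑ i : Fin N,
        Real.cos ((((i:ℕ):ℝ)+1) * (((j:ℕ):ℝ) - ((j:ℕ):ℝ)) * π / ((N:ℝ)+1)) = N := by
      rw [Finset.sum_congr rfl (fun i _ => by
        rw [show (((i:ℕ):ℝ)+1) * (((j:ℕ):ℝ) - ((j:ℕ):ℝ)) * π / ((N:ℝ)+1) = 0 from by ring,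
          Real.cos_zero])]
      simp
    have hC2 := hsumB (((j:ℕ):ℤ) + ((j:ℕ):ℤ) + 2) rfl
    have hcos : Real.cos (((((j:ℕ):ℤ) + ((j:ℕ):ℤ) + 2 : ℤ):ℝ)*π) = 1 := by
      rw [show ((((j:ℕ):ℤ) + ((j:ℕ):ℤ) + 2 : ℤ):ℝ)*π = ((((j:ℕ):ℤ)+1 : ℤ):ℝ) * (2*π) from by
        push_cast; ring]
      exact Real.cos_int_mul_two_pi _
    rw [hcos] at hC2
    rw [← Finset.sum_div, Finset.sum_sub_distrib, hC1, hC2, Matrix.one_apply_eq]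
    field_simp
    ring
  · have hval : ((j:ℕ):ℤ) ≠ ((k:ℕ):ℤ) := by
      intro h; apply hjk; apply Fin.ext; omega
    have hC1 : ∑ i : Fin N,
        Real.cos ((((i:ℕ):ℝ)+1) * (((j:ℕ):ℝ) - ((k:ℕ):ℝ)) * π / ((N:ℝ)+1))
        = -(1 + Real.cos (((((j:ℕ):ℤ) - ((k:ℕ):ℤ) : ℤ):ℝ)*π))/2 := by
      rw [Finset.sum_congr rfl (fun i _ => by
        rw [show (((i:ℕ):ℝ)+1) * (((j:ℕ):ℝ) - ((k:ℕ):ℝ)) * π / ((N:ℝ)+1)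
            = (((i:ℕ):ℝ)+1) * (((((j:ℕ):ℤ) - ((k:ℕ):ℤ) : ℤ)):ℝ) * π / ((N:ℝ)+1) from by
          push_cast; ring])]
      exact cos_sum N (((j:ℕ):ℤ) - ((k:ℕ):ℤ)) (by omega) (by omega)
    have hC2 := hsumB (((j:ℕ):ℤ) + ((k:ℕ):ℤ) + 2) rfl
    have hcos : Real.cos (((((j:ℕ):ℤ) + ((k:ℕ):ℤ) + 2 : ℤ):ℝ)*π)
        = Real.cos (((((j:ℕ):ℤ) - ((k:ℕ):ℤ) : ℤ):ℝ)*π) := by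
      rw [show ((((j:ℕ):ℤ) + ((k:ℕ):ℤ) + 2 : ℤ):ℝ)*π
          = ((((j:ℕ):ℤ) - ((k:ℕ):ℤ) : ℤ):ℝ)*π + (((k:ℕ):ℤ)+1 : ℤ) * (2*π) from by
        push_cast; ring]
      exact Real.cos_add_int_mul_two_pi _ _
    rw [hcos] at hC2
    rw [← Finset.sum_div, Finset.sum_sub_distrib, hC1, hC2, Matrix.one_apply_ne hjk]
    ring

theorem tau_matrix_diagonalized_by_dst (N : ℕ) (hN : 1 ≤ N) (c : ℕ → ℝ) :
    (∀ k : Fin N,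
      (toeplitzOf N c - hankelOf N c).mulVec
          (fun j : Fin N =>
            Real.sin ((((j : ℕ) : ℝ) + 1) * (((k : ℕ) : ℝ) + 1) * π / ((N : ℝ) + 1))) =
        tauEigen N c k •
          (fun j : Fin N =>
            Real.sin ((((j : ℕ) : ℝ) + 1) * (((k : ℕ) : ℝ) + 1) * π / ((N : ℝ) + 1)))) ∧
    dstMatrix N * (toeplitzOf N c - hankelOf N c) * dstMatrix N =
      Matrix.diagonal (tauEigen N c) := by
  have part1 : ∀ k : Fin N,
      (toeplitzOf N c - hankelOf N c).mulVec
          (fun j : Fin N =>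
            Real.sin ((((j : ℕ) : ℝ) + 1) * (((k : ℕ) : ℝ) + 1) * π / ((N : ℝ) + 1))) =
        tauEigen N c k •
          (fun j : Fin N =>
            Real.sin ((((j : ℕ) : ℝ) + 1) * (((k : ℕ) : ℝ) + 1) * π / ((N : ℝ) + 1))) := by
    intro k
    funext j
    simp only [Matrix.mulVec, dotProduct, Pi.smul_apply, smul_eq_mul]
    rw [Finset.sum_congr rfl (fun t _ => by rw [← FF_eq N k t])]
    rw [← FF_eq N k j]
    exact component N hN c k j
  refine ⟨part1, ?_⟩
  have h1 : (toeplitzOf N c - hankelOf N c) * dstMatrix N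
      = dstMatrix N * Matrix.diagonal (tauEigen N c) := by
    ext j k
    rw [Matrix.mul_apply, Matrix.mul_diagonal]
    simp only [dstMatrix, Matrix.of_apply]
    have hcomp := congrFun (part1 k) j
    simp only [Matrix.mulVec, dotProduct, Pi.smul_apply, smul_eq_mul] at hcomp
    calc ∑ i : Fin N, (toeplitzOf N c - hankelOf N c) j i *
          (Real.sqrt (2 / ((N:ℝ)+1)) *
            Real.sin ((((i:ℕ):ℝ)+1) * (((k:ℕ):ℝ)+1) * π / ((N:ℝ)+1)))
        = Real.sqrt (2 / ((N:ℝ)+1)) * ∑ i : Fin N, (toeplitzOf N c - hankelOf N c) j i *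
            Real.sin ((((i:ℕ):ℝ)+1) * (((k:ℕ):ℝ)+1) * π / ((N:ℝ)+1)) := by
          rw [Finset.mul_sum]
          refine Finset.sum_congr rfl fun i _ => by ring
      _ = Real.sqrt (2 / ((N:ℝ)+1)) * (tauEigen N c k *
            Real.sin ((((j:ℕ):ℝ)+1) * (((k:ℕ):ℝ)+1) * π / ((N:ℝ)+1))) := by rw [hcomp]
      _ = Real.sqrt (2 / ((N:ℝ)+1)) *
            Real.sin ((((j:ℕ):ℝ)+1) * (((k:ℕ):ℝ)+1) * π / ((N:ℝ)+1)) * tauEigen N c k := by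
          ring
  calc dstMatrix N * (toeplitzOf N c - hankelOf N c) * dstMatrix N
      = dstMatrix N * ((toeplitzOf N c - hankelOf N c) * dstMatrix N) := by
        rw [Matrix.mul_assoc]
    _ = dstMatrix N * (dstMatrix N * Matrix.diagonal (tauEigen N c)) := by rw [h1]
    _ = (dstMatrix N * dstMatrix N) * Matrix.diagonal (tauEigen N c) := by
        rw [Matrix.mul_assoc]
    _ = Matrix.diagonal (tauEigen N c) := by rw [dst_sq, Matrix.one_mul]
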